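/- arXiv:1510.04222 — 6 statements merged into one kernel-verified Lean document; each statement's English description precedes it below -/
import Mathlib

section
/- Let p ≥ 1, let Ξ be a compact convex subset of ℝ^p (with the Euclidean norm), let y ∈ ℝ^p with y ∉ Ξ, and let δ ≥ 0. Then the closed ball of centre y and radius δ is not contained in the δ-dilation Ξ^{⊕δ} of Ξ; that is, there exists v ∈ ℝ^p with ‖v − y‖ ≤ δ and v ∉ Ξ^{⊕δ}. -/
open Metric Pointwise

/-- Lemma A.3: for a compact convex set `Ξ ⊆ ℝ^p`, a point `y ∉ Ξ` and `δ ≥ 0`,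
the closed ball `B̄(y,δ)` is not contained in the `δ`-dilation `Ξ ⊕ B̄(0,δ)`. -/
theorem dilation_ball_not_subset
    (p : ℕ) (hp : 1 ≤ p)
    (Ξ : Set (EuclideanSpace ℝ (Fin p)))
    (hΞc : IsCompact Ξ) (hΞconv : Convex ℝ Ξ)
    (y : EuclideanSpace ℝ (Fin p)) (hy : y ∉ Ξ)
    (δ : ℝ) (hδ : 0 ≤ δ) :
    ∃ v : EuclideanSpace ℝ (Fin p),
      ‖v - y‖ ≤ δ ∧ v ∉ Ξ + Metric.closedBall (0 : EuclideanSpace ℝ (Fin p)) δ := by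
  rcases Ξ.eq_empty_or_nonempty with hE | ⟨x0, hx0⟩
  · refine ⟨y, by simpa using hδ, ?_⟩
    simp [hE]
  · obtain ⟨f, u, hfu, huy⟩ :=
      geometric_hahn_banach_closed_point hΞconv hΞc.isClosed hy
    set w : EuclideanSpace ℝ (Fin p) :=
      (InnerProductSpace.toDual ℝ (EuclideanSpace ℝ (Fin p))).symm f with hw
    have hfw : ∀ z, f z = inner ℝ w z := fun z => by
      rw [hw]
      simp [real_inner_comm]
    have hwne : w ≠ 0 := by
      intro h0
      have := hfu x0 hx0
      rw [hfw, h0] at this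
      rw [hfw, h0] at huy
      simp at this huy
      linarith
    have hwpos : (0:ℝ) < ‖w‖ := norm_pos_iff.mpr hwne
    refine ⟨y + (δ / ‖w‖) • w, ?_, ?_⟩
    · have : ‖(δ / ‖w‖) • w‖ = δ := by
        rw [norm_smul, Real.norm_eq_abs, abs_of_nonneg (by positivity)]
        field_simp
      simp [this]
    · rintro ⟨x, hx, z, hz, hxz⟩
      simp only [Metric.mem_closedBall, dist_zero_right] at hz
      have h1 : (inner ℝ w (x + z) : ℝ) = inner ℝ w x + inner ℝ w z := inner_add_right w x z
      have h2 : (inner ℝ w z : ℝ) ≤ ‖w‖ * δ := by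
        calc (inner ℝ w z : ℝ) ≤ ‖w‖ * ‖z‖ := real_inner_le_norm w z
        _ ≤ ‖w‖ * δ := by nlinarith
      have h3 : (inner ℝ w (y + (δ / ‖w‖) • w) : ℝ) = inner ℝ w y + ‖w‖ * δ := by
        rw [inner_add_right, real_inner_smul_right, real_inner_self_eq_norm_sq]
        field_simp
      have h4 : (inner ℝ w x : ℝ) < inner ℝ w y := by
        rw [← hfw, ← hfw]; exact (hfu x hx).trans huy
      rw [show (fun x1 x2 => x1 + x2) x z = x + z from rfl] at hxz; rw [hxz, h3] at h1
      linarith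
end

section
/- Let p ≥ 1, let Θ be a nonempty compact convex subset of ℝ^p, and let {Θ_n}_{n∈ℕ} be a sequence of nonempty compact convex subsets of ℝ^p whose Hausdorff distance to Θ tends to 0 as n → ∞. Let r ≥ 0 and x ∈ ℝ^p be such that the closed ball B̄(x,r) is contained in the interior of Θ. Then there exists N ∈ ℕ such that for all n ≥ N, B̄(x,r) ⊆ Θ_n. -/
open Metric Filter

/-- Lemma A.4: if nonempty compact convex sets `Θ_n ⊆ ℝ^p` converge to a nonempty
compact convex set `Θ` in Hausdorff distance, and the closed ball `B̄(x,r)` lies in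
the interior of `Θ`, then `B̄(x,r) ⊆ Θ_n` for all large `n`. -/
theorem closedBall_subset_of_hausdorff_tendsto
    (p : ℕ) (hp : 1 ≤ p)
    (Θ : Set (EuclideanSpace ℝ (Fin p)))
    (hne : Θ.Nonempty) (hc : IsCompact Θ) (hconv : Convex ℝ Θ)
    (Θn : ℕ → Set (EuclideanSpace ℝ (Fin p)))
    (hnne : ∀ n, (Θn n).Nonempty) (hnc : ∀ n, IsCompact (Θn n))
    (hnconv : ∀ n, Convex ℝ (Θn n))
    (hHD : Tendsto (fun n => Metric.hausdorffDist (Θn n) Θ) atTop (nhds 0))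
    (r : ℝ) (hr : 0 ≤ r) (x : EuclideanSpace ℝ (Fin p))
    (hball : Metric.closedBall x r ⊆ interior Θ) :
    ∃ N : ℕ, ∀ n ≥ N, Metric.closedBall x r ⊆ Θn n := by
  -- Step 1: enlarge the ball: find ε > 0 with closedBall x (r+ε) ⊆ Θ
  obtain ⟨ε, hε, hthick⟩ :=
    (isCompact_closedBall x r).exists_cthickening_subset_open isOpen_interior hball
  have hball' : Metric.closedBall x (ε + r) ⊆ Θ := by
    rw [← cthickening_closedBall hε.le hr x]
    exact hthick.trans interior_subset
  -- Step 2: eventually hausdorffDist (Θn n) Θ < ε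
  have hev : ∀ᶠ n in atTop, hausdorffDist (Θn n) Θ < ε := by
    have := hHD.eventually (gt_mem_nhds hε)
    exact this
  obtain ⟨N, hN⟩ := eventually_atTop.1 hev
  refine ⟨N, fun n hn y hy => ?_⟩
  have hHDn : hausdorffDist (Θn n) Θ < ε := hN n hn
  by_contra hyC
  -- projection of y on Θn n
  obtain ⟨z, hzC, hz⟩ := (hnc n).exists_infDist_eq_dist (hnne n) y
  have hproj : ∀ w ∈ Θn n, inner ℝ (y - z) (w - z) ≤ (0 : ℝ) := by
    rw [← norm_eq_iInf_iff_real_inner_le_zero (hnconv n) hzC]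
    rw [infDist_eq_iInf] at hz
    simp only [dist_eq_norm] at hz
    exact hz.symm
  have hyz : y ≠ z := fun h => hyC (h ▸ hzC)
  have hnorm_pos : (0 : ℝ) < ‖y - z‖ := by
    rw [norm_pos_iff, sub_ne_zero]; exact hyz
  set v : EuclideanSpace ℝ (Fin p) := ‖y - z‖⁻¹ • (y - z) with hv
  have hvnorm : ‖v‖ = 1 := by
    rw [hv, norm_smul, norm_inv, norm_norm, inv_mul_cancel₀ hnorm_pos.ne']
  set y' : EuclideanSpace ℝ (Fin p) := y + ε • v with hy'
  have hy'mem : y' ∈ Θ := by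
    apply hball'
    have : dist y' x ≤ dist y' y + dist y x := dist_triangle _ _ _
    have h1 : dist y' y = ε := by
      rw [hy', dist_eq_norm, add_sub_cancel_left, norm_smul, hvnorm,
        Real.norm_eq_abs, abs_of_pos hε, mul_one]
    rw [mem_closedBall]
    calc dist y' x ≤ dist y' y + dist y x := dist_triangle _ _ _
      _ ≤ ε + r := add_le_add h1.le (mem_closedBall.1 hy)
  -- y' is within hausdorffDist of Θn n
  have hEdist : EMetric.hausdorffEdist (Θn n) Θ ≠ ⊤ :=
    Metric.hausdorffEdist_ne_top_of_nonempty_of_bounded (hnne n) hne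
      (hnc n).isBounded hc.isBounded
  have hinf : infDist y' (Θn n) ≤ hausdorffDist (Θn n) Θ := by
    rw [hausdorffDist_comm]
    exact infDist_le_hausdorffDist_of_mem hy'mem (by rwa [EMetric.hausdorffEdist_comm])
  -- but dist from y' to any point of Θn n is > ε
  have hlb : ∀ w ∈ Θn n, ε ≤ dist y' w := by
    intro w hw
    have hinner : inner ℝ v (y' - w) ≥ ε + ‖y - z‖ := by
      have h1 : y' - w = (y - z) + ε • v + (z - w) := by rw [hy']; abel
      have h2 : inner ℝ v (y - z) = (‖y - z‖ : ℝ) := by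
        rw [hv, real_inner_smul_left, real_inner_self_eq_norm_sq]
        field_simp
      have h3 : inner ℝ v (ε • v) = (ε : ℝ) := by
        rw [real_inner_smul_right, real_inner_self_eq_norm_sq, hvnorm]; ring
      have h4 : (0 : ℝ) ≤ inner ℝ v (z - w) := by
        have := hproj w hw
        rw [hv, real_inner_smul_left]
        have : inner ℝ (y - z) (z - w) ≥ (0 : ℝ) := by
          have h5 := hproj w hw
          have : (z : EuclideanSpace ℝ (Fin p)) - w = -(w - z) := by abel
          rw [this, inner_neg_right]
          linarith
        positivity
      rw [h1, inner_add_right, inner_add_right, h2, h3]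
      linarith
    have : ε + ‖y - z‖ ≤ ‖y' - w‖ := by
      calc ε + ‖y - z‖ ≤ inner ℝ v (y' - w) := hinner
        _ ≤ ‖v‖ * ‖y' - w‖ := real_inner_le_norm _ _
        _ = ‖y' - w‖ := by rw [hvnorm, one_mul]
    rw [dist_eq_norm]
    linarith [norm_nonneg (y - z)]
  obtain ⟨z', hz'C, hz'⟩ := (hnc n).exists_infDist_eq_dist (hnne n) y'
  have := hlb z' hz'C
  rw [← hz'] at this
  linarith
end

section
/- Let p ≥ 1, let Θ ⊆ ℝ^p be compact and θ₀ ∈ Θ. Let 0 ≤ r_min < r_max, let w : ℝ → ℝ be Lebesgue-integrable on [r_min, r_max] with w(t) > 0 for every t ∈ [r_min, r_max], and let Φ : [r_min, r_max] × Θ → ℝ be continuous. Assume identifiability: for every θ ∈ Θ with θ ≠ θ₀, the set { t ∈ [r_min,r_max] : Φ(t,θ) ≠ Φ(t,θ₀) } has positive Lebesgue measure. Let A ⊆ [r_min,r_max] be such that [r_min,r_max] ∖ A has Lebesgue measure zero, and let (φ_n)_{n∈ℕ} be bounded measurable functions on [r_min,r_max] with sup_{t ∈ A} |φ_n(t) −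 Φ(t,θ₀)| → 0 as n → ∞. If (θ_n)_{n∈ℕ} is any sequence in Θ such that for every n and every θ ∈ Θ, U(φ_n, θ_n) ≤ U(φ_n, θ), then θ_n → θ₀. -/
open MeasureTheory Filter

set_option maxHeartbeats 1600000 in
/-- Deterministic core of Theorem A.1 (consistency of minimum contrast estimators):
if `φ_n → Φ(·,θ₀)` uniformly on a full-measure subset `A` of `[r_min,r_max]`, then any
sequence of minimizers `θ_n` of the contrast `θ ↦ ∫ w (φ_n - Φ(·,θ))²` converges to `θ₀`. -/
theorem minimum_contrast_consistency_deterministic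
    (p : ℕ) (hp : 1 ≤ p)
    (Θ : Set (EuclideanSpace ℝ (Fin p))) (hΘ : IsCompact Θ)
    (θ₀ : EuclideanSpace ℝ (Fin p)) (hθ₀ : θ₀ ∈ Θ)
    (rmin rmax : ℝ) (h0 : 0 ≤ rmin) (hlt : rmin < rmax)
    (w : ℝ → ℝ) (hw : IntegrableOn w (Set.Icc rmin rmax) volume)
    (hwpos : ∀ t ∈ Set.Icc rmin rmax, 0 < w t)
    (Φ : ℝ → EuclideanSpace ℝ (Fin p) → ℝ)
    (hΦ : ContinuousOn (fun q : ℝ × EuclideanSpace ℝ (Fin p) => Φ q.1 q.2)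
      (Set.Icc rmin rmax ×ˢ Θ))
    (hident : ∀ θ ∈ Θ, θ ≠ θ₀ →
      0 < volume {t ∈ Set.Icc rmin rmax | Φ t θ ≠ Φ t θ₀})
    (A : Set ℝ) (hA : A ⊆ Set.Icc rmin rmax)
    (hAnull : volume (Set.Icc rmin rmax \ A) = 0)
    (φ : ℕ → ℝ → ℝ) (hφmeas : ∀ n, Measurable (φ n))
    (hφbdd : ∀ n, ∃ C, ∀ t ∈ Set.Icc rmin rmax, |φ n t| ≤ C)
    (hconv : TendstoUniformlyOn (fun n t => φ n t) (fun t => Φ t θ₀) atTop A)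
    (θseq : ℕ → EuclideanSpace ℝ (Fin p)) (hθseqΘ : ∀ n, θseq n ∈ Θ)
    (hmin : ∀ n, ∀ θ ∈ Θ,
      (∫ t in Set.Icc rmin rmax, w t * (φ n t - Φ t (θseq n)) ^ 2) ≤
      (∫ t in Set.Icc rmin rmax, w t * (φ n t - Φ t θ) ^ 2)) :
    Tendsto θseq atTop (nhds θ₀) := by
  set S : Set ℝ := Set.Icc rmin rmax with hSdef
  have hSm : MeasurableSet S := measurableSet_Icc
  -- `A` has full measure in `S`
  have hAae : ∀ᵐ t ∂(volume.restrict S), t ∈ A := by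
    rw [ae_iff]
    have hset : {t | ¬ t ∈ A} = Aᶜ := rfl
    rw [hset, Measure.restrict_apply' hSm]
    refine le_antisymm (le_trans (measure_mono ?_) hAnull.le) zero_le
    intro t ht; exact ⟨ht.2, ht.1⟩
  -- uniform bound on Φ
  obtain ⟨C0, hC0⟩ := (isCompact_Icc.prod hΘ).exists_bound_of_continuousOn hΦ
  set M : ℝ := max C0 0 with hMdef
  have hM0 : (0:ℝ) ≤ M := le_max_right _ _
  have hM : ∀ t ∈ S, ∀ θ ∈ Θ, |Φ t θ| ≤ M := by
    intro t ht θ hθ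
    have := hC0 (t, θ) ⟨ht, hθ⟩
    rw [Real.norm_eq_abs] at this
    exact this.trans (le_max_left _ _)
  -- continuity in each variable
  have hΦt : ∀ θ ∈ Θ, ContinuousOn (fun t => Φ t θ) S := by
    intro θ hθ
    have hc : Continuous (fun t : ℝ => (t, θ)) := by continuity
    have := hΦ.comp hc.continuousOn (fun t ht => ⟨ht, hθ⟩)
    exact this
  have hΦθ : ∀ t ∈ S, ContinuousOn (fun θ => Φ t θ) Θ := by
    intro t ht
    have hc : Continuous (fun θ : EuclideanSpace ℝ (Fin p) => (t, θ)) := by continuity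
    have := hΦ.comp hc.continuousOn (fun θ hθ => ⟨ht, hθ⟩)
    exact this
  have hwn : IntegrableOn (fun t => |w t|) S volume := by
    exact (by simpa [Real.norm_eq_abs] using hw.norm : Integrable (fun t => |w t|) (volume.restrict S))
  set W : ℝ := ∫ t in S, |w t| with hWdef
  have hW0 : (0:ℝ) ≤ W := integral_nonneg fun t => abs_nonneg _
  -- integrability helper
  have hInt : ∀ g : ℝ → ℝ, AEStronglyMeasurable g (volume.restrict S) →
      ∀ K : ℝ, (∀ t ∈ S, |g t| ≤ K) →
      IntegrableOn (fun t => w t * g t) S volume := by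
    intro g hg K hK
    refine Integrable.mono' (hwn.const_mul K) (hw.aestronglyMeasurable.mul hg) ?_
    refine (ae_restrict_iff' hSm).2 (ae_of_all _ fun t ht => ?_)
    have hKt := hK t ht
    calc ‖w t * g t‖ = |w t| * |g t| := by rw [Real.norm_eq_abs, abs_mul]
      _ ≤ |w t| * K := mul_le_mul_of_nonneg_left hKt (abs_nonneg _)
      _ = K * |w t| := mul_comm _ _
  have hsqASM : ∀ f : ℝ → ℝ, AEStronglyMeasurable f (volume.restrict S) →
      AEStronglyMeasurable (fun t => (f t) ^ 2) (volume.restrict S) := by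
    intro f hf
    simp only [pow_two]
    exact hf.mul hf
  have hΦasm : ∀ θ ∈ Θ, AEStronglyMeasurable (fun t => Φ t θ) (volume.restrict S) :=
    fun θ hθ => (hΦt θ hθ).aestronglyMeasurable hSm
  -- integrability of all integrands
  have hIntU : ∀ θ ∈ Θ, IntegrableOn (fun t => w t * (Φ t θ - Φ t θ₀) ^ 2) S volume := by
    intro θ hθ
    refine hInt _ (hsqASM _ ((hΦasm θ hθ).sub (hΦasm θ₀ hθ₀))) ((2*M)^2) ?_
    intro t ht
    have h1 := abs_le.1 (hM t ht θ hθ)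
    have h2 := abs_le.1 (hM t ht θ₀ hθ₀)
    rw [abs_of_nonneg (sq_nonneg _)]
    nlinarith [h1.1, h1.2, h2.1, h2.2]
  have hIntUn : ∀ n, ∀ θ ∈ Θ, IntegrableOn (fun t => w t * (φ n t - Φ t θ) ^ 2) S volume := by
    intro n θ hθ
    obtain ⟨C, hC⟩ := hφbdd n
    refine hInt _ (hsqASM _ ((hφmeas n).aestronglyMeasurable.sub (hΦasm θ hθ))) ((C + M)^2) ?_
    intro t ht
    have h1 := abs_le.1 (hC t ht)
    have h2 := abs_le.1 (hM t ht θ hθ)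
    rw [abs_of_nonneg (sq_nonneg _)]
    nlinarith [h1.1, h1.2, h2.1, h2.2]
  set U : EuclideanSpace ℝ (Fin p) → ℝ :=
    fun θ => ∫ t in S, w t * (Φ t θ - Φ t θ₀) ^ 2 with hUdef
  -- positivity of the limiting contrast away from θ₀
  have hUpos : ∀ θ ∈ Θ, θ ≠ θ₀ → 0 < U θ := by
    intro θ hθ hne
    have hnn : 0 ≤ᵐ[volume.restrict S] fun t => w t * (Φ t θ - Φ t θ₀) ^ 2 :=
      (ae_restrict_iff' hSm).2 (ae_of_all _ fun t ht =>
        mul_nonneg (hwpos t ht).le (sq_nonneg _))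
    rw [show U θ = ∫ t in S, w t * (Φ t θ - Φ t θ₀) ^ 2 from rfl,
      setIntegral_pos_iff_support_of_nonneg_ae hnn (hIntU θ hθ)]
    refine lt_of_lt_of_le (hident θ hθ hne) (measure_mono ?_)
    rintro t ⟨ht, hne'⟩
    refine ⟨?_, ht⟩
    simp only [Function.mem_support]
    exact mul_ne_zero (hwpos t ht).ne' (pow_ne_zero _ (sub_ne_zero.2 hne'))
  -- sequential continuity of U along sequences in Θ
  have hUcont : ∀ σ : ℕ → EuclideanSpace ℝ (Fin p), (∀ k, σ k ∈ Θ) →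
      ∀ θs ∈ Θ, Tendsto σ atTop (nhds θs) →
      Tendsto (fun k => U (σ k)) atTop (nhds (U θs)) := by
    intro σ hσ θs hθs hσt
    refine tendsto_integral_of_dominated_convergence (fun t => (2*M)^2 * |w t|)
      (fun k => (hIntU (σ k) (hσ k)).aestronglyMeasurable)
      (hwn.const_mul _) ?_ ?_
    · intro k
      refine (ae_restrict_iff' hSm).2 (ae_of_all _ fun t ht => ?_)
      have h1 := abs_le.1 (hM t ht (σ k) (hσ k))
      have h2 := abs_le.1 (hM t ht θ₀ hθ₀)
      have hb : |(Φ t (σ k) - Φ t θ₀) ^ 2| ≤ (2*M)^2 := by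
        rw [abs_of_nonneg (sq_nonneg _)]
        nlinarith [h1.1, h1.2, h2.1, h2.2]
      calc ‖w t * (Φ t (σ k) - Φ t θ₀) ^ 2‖
          = |w t| * |(Φ t (σ k) - Φ t θ₀) ^ 2| := by rw [Real.norm_eq_abs, abs_mul]
        _ ≤ |w t| * (2*M)^2 := mul_le_mul_of_nonneg_left hb (abs_nonneg _)
        _ = (2*M)^2 * |w t| := mul_comm _ _
    · refine (ae_restrict_iff' hSm).2 (ae_of_all _ fun t ht => ?_)
      have hcont : ContinuousWithinAt (fun θ => Φ t θ) Θ θs := (hΦθ t ht) θs hθs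
      have htend : Tendsto (fun k => Φ t (σ k)) atTop (nhds (Φ t θs)) := by
        refine hcont.tendsto.comp ?_
        exact tendsto_nhdsWithin_iff.2 ⟨hσt, Eventually.of_forall hσ⟩
      exact ((htend.sub tendsto_const_nhds).pow 2).const_mul (w t)
  -- eventual smallness of U along the minimizing sequence
  have hUsmall : ∀ δ : ℝ, 0 < δ → ∀ᶠ n in atTop, U (θseq n) ≤ δ := by
    intro δ hδ
    have hden : (0:ℝ) < (4*M+2)*W + 1 := by nlinarith
    set ε : ℝ := min 1 (δ / ((4*M+2)*W + 1)) with hεdef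
    have hεpos : 0 < ε := lt_min one_pos (div_pos hδ hden)
    have hε1 : ε ≤ 1 := min_le_left _ _
    have hεδ : ε * ((4*M+2)*W + 1) ≤ δ := by
      have h2 : ε ≤ δ / ((4*M+2)*W + 1) := min_le_right _ _
      calc ε * ((4*M+2)*W + 1) ≤ (δ / ((4*M+2)*W + 1)) * ((4*M+2)*W + 1) :=
            mul_le_mul_of_nonneg_right h2 hden.le
        _ = δ := div_mul_cancel₀ _ hden.ne'
    filter_upwards [(Metric.tendstoUniformlyOn_iff.1 hconv) ε hεpos] with n hn
    have hptA : ∀ t ∈ A, |φ n t - Φ t θ₀| ≤ ε := by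
      intro t ht
      have := hn t ht
      rw [Real.dist_eq, abs_sub_comm] at this
      exact this.le
    set θn := θseq n with hθn
    have hθnΘ : θn ∈ Θ := hθseqΘ n
    have hI1 : IntegrableOn (fun t => w t * (φ n t - Φ t θn) ^ 2) S volume := hIntUn n θn hθnΘ
    have hI0 : IntegrableOn (fun t => w t * (φ n t - Φ t θ₀) ^ 2) S volume := hIntUn n θ₀ hθ₀
    have hIU : IntegrableOn (fun t => w t * (Φ t θn - Φ t θ₀) ^ 2) S volume := hIntU θn hθnΘ
    have hIwc : ∀ c : ℝ, IntegrableOn (fun t => c * |w t|) S volume := fun c => hwn.const_mul c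
    -- step 1 : U θn ≤ Uₙ(θn) + ε(4M+ε)W
    have key1 : U θn ≤ (∫ t in S, w t * (φ n t - Φ t θn) ^ 2) + ε*(4*M+ε)*W := by
      have hmono : U θn ≤ ∫ t in S,
          (w t * (φ n t - Φ t θn) ^ 2 + ε*(4*M+ε) * |w t|) := by
        refine integral_mono_ae hIU (hI1.add (hIwc _)) ?_
        filter_upwards [hAae] with t htA
        have htS : t ∈ S := hA htA
        have he := hptA t htA
        have h1 := hM t htS θn hθnΘ
        have h2 := hM t htS θ₀ hθ₀
        have hwt := hwpos t htS
        show w t * (Φ t θn - Φ t θ₀) ^ 2 ≤ w t * (φ n t - Φ t θn) ^ 2 + ε*(4*M+ε) * |w t|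
        rw [abs_of_pos hwt]
        have hd : |(Φ t θn - Φ t θ₀) - (φ n t - Φ t θn)| ≤ 4*M + ε := by
          have ht1 : |Φ t θn - Φ t θ₀| ≤ 2*M := by
            calc |Φ t θn - Φ t θ₀| ≤ |Φ t θn| + |Φ t θ₀| := abs_sub _ _
              _ ≤ 2*M := by linarith
          have ht2 : |φ n t - Φ t θn| ≤ ε + 2*M := by
            calc |φ n t - Φ t θn| ≤ |φ n t - Φ t θ₀| + |Φ t θ₀ - Φ t θn| := abs_sub_le _ _ _
              _ ≤ ε + 2*M := by
                  have h3 : |Φ t θ₀ - Φ t θn| ≤ |Φ t θ₀| + |Φ t θn| := abs_sub _ _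
                  linarith
          calc |(Φ t θn - Φ t θ₀) - (φ n t - Φ t θn)|
              ≤ |Φ t θn - Φ t θ₀| + |φ n t - Φ t θn| := abs_sub _ _
            _ ≤ 4*M + ε := by linarith
        have hkey : (Φ t θn - Φ t θ₀)^2 - (φ n t - Φ t θn)^2 ≤ ε*(4*M+ε) := by
          calc (Φ t θn - Φ t θ₀)^2 - (φ n t - Φ t θn)^2
              = ((Φ t θn - Φ t θ₀) - (φ n t - Φ t θn)) * (φ n t - Φ t θ₀) := by ring
            _ ≤ |((Φ t θn - Φ t θ₀) - (φ n t - Φ t θn)) * (φ n t - Φ t θ₀)| := le_abs_self _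
            _ = |(Φ t θn - Φ t θ₀) - (φ n t - Φ t θn)| * |φ n t - Φ t θ₀| := abs_mul _ _
            _ ≤ (4*M + ε) * ε := by
                refine mul_le_mul hd he (abs_nonneg _) (by positivity)
            _ = ε*(4*M+ε) := mul_comm _ _
        have := mul_le_mul_of_nonneg_left hkey hwt.le
        rw [mul_sub] at this
        linarith
      rwa [integral_add hI1 (hIwc _), integral_const_mul] at hmono
    -- step 2 : minimizer property
    have key2 : (∫ t in S, w t * (φ n t - Φ t θn) ^ 2) ≤
        ∫ t in S, w t * (φ n t - Φ t θ₀) ^ 2 := hmin n θ₀ hθ₀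
    -- step 3 : Uₙ(θ₀) ≤ ε² W
    have key3 : (∫ t in S, w t * (φ n t - Φ t θ₀) ^ 2) ≤ ε^2 * W := by
      have hmono : (∫ t in S, w t * (φ n t - Φ t θ₀) ^ 2) ≤
          ∫ t in S, ε^2 * |w t| := by
        refine integral_mono_ae hI0 (hIwc _) ?_
        filter_upwards [hAae] with t htA
        have htS : t ∈ S := hA htA
        have he := hptA t htA
        have hwt := hwpos t htS
        show w t * (φ n t - Φ t θ₀) ^ 2 ≤ ε^2 * |w t|
        rw [abs_of_pos hwt]
        have : (φ n t - Φ t θ₀)^2 ≤ ε^2 := by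
          have := abs_le.1 he
          nlinarith [this.1, this.2]
        nlinarith [hwt.le]
      rwa [integral_const_mul] at hmono
    -- combine
    have hcomb : U θn ≤ ε^2*W + ε*(4*M+ε)*W := by linarith
    have hsq : ε^2 ≤ ε := by nlinarith
    nlinarith [mul_le_mul_of_nonneg_right hsq hW0, mul_nonneg hεpos.le hW0,
      mul_nonneg hM0 hW0, mul_nonneg (mul_nonneg hεpos.le hM0) hW0]
  -- nonnegativity of U
  have hUnonneg : ∀ θ, 0 ≤ U θ := fun θ =>
    integral_nonneg_of_ae ((ae_restrict_iff' hSm).2 (ae_of_all _ fun t ht =>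
      mul_nonneg (hwpos t ht).le (sq_nonneg _)))
  -- subsequence argument
  refine tendsto_of_subseq_tendsto fun ns hns => ?_
  obtain ⟨θs, hθsΘ, ms, hmsmono, htd⟩ := hΘ.isSeqCompact (fun k => hθseqΘ (ns k))
  have htd' : Tendsto (fun k => θseq (ns (ms k))) atTop (nhds θs) := by
    exact htd
  refine ⟨ms, ?_⟩
  have hθs0 : θs = θ₀ := by
    by_contra hne
    have hpos := hUpos θs hθsΘ hne
    have htU : Tendsto (fun k => U (θseq (ns (ms k)))) atTop (nhds (U θs)) :=
      hUcont _ (fun k => hθseqΘ _) θs hθsΘ htd'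
    have hms' : Tendsto (fun k => ns (ms k)) atTop atTop := hns.comp hmsmono.tendsto_atTop
    have hev : ∀ᶠ k in atTop, U (θseq (ns (ms k))) ≤ U θs / 2 :=
      hms'.eventually (hUsmall (U θs / 2) (by linarith))
    have hle : U θs ≤ U θs / 2 := le_of_tendsto htU hev
    linarith
  rw [hθs0] at htd'
  exact htd'
end

section
/- Let p ≥ 1, let Θ ⊆ ℝ^p be compact and θ₀ ∈ Θ. Let 0 ≤ r_min < r_max, let w : ℝ → ℝ be Lebesgue-integrable on [r_min, r_max] with w(t) > 0 for every t ∈ [r_min, r_max], and let Φ : [r_min, r_max] × Θ → ℝ be continuous, satisfying identifiability: for every θ ∈ Θ with θ ≠ θ₀, the set { t ∈ [r_min,r_max] : Φ(t,θ) ≠ Φ(t,θ₀) } has positive Lebesgue measure. Let (Ω, 𝒜, P) be a probability space, A ⊆ [r_min,r_max] with Lebesgue-null complement in [r_min,r_max], and for each n let φ_n : Ω × [r_min,r_max] → ℝ be jointly measurable with φ_n(ω,·) bounded for every ω. Assume the random variables S_n(ω) := sup_{t∈A} |φ_n(ω,t) − Φ(t,θ₀)| are measurable and converge to 0 in probability.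 Let θ̂_n : Ω → ℝ^p be measurable with θ̂_n(ω) ∈ Θ and such that, for P-almost every ω, U(φ_n(ω,·), θ̂_n(ω)) ≤ U(φ_n(ω,·), θ) for all θ ∈ Θ. Then θ̂_n → θ₀ in probability, i.e., for every ε > 0, P( ‖θ̂_n − θ₀‖ > ε ) → 0 as n → ∞. -/
open MeasureTheory Filter

/-- Theorem A.1, convergence-in-probability conclusion: measurable minimizers `θ̂_n` of the
random contrast `θ ↦ ∫ w (φ_n(ω,·) - Φ(·,θ))²` converge to `θ₀` in probability, provided the
sup-deviations `S_n(ω) = sup_{t ∈ A} |φ_n(ω,t) - Φ(t,θ₀)|` tend to `0` in probability. -/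
theorem minimum_contrast_consistency_in_probability
    (p : ℕ) (hp : 1 ≤ p)
    (Θ : Set (EuclideanSpace ℝ (Fin p))) (hΘ : IsCompact Θ)
    (θ₀ : EuclideanSpace ℝ (Fin p)) (hθ₀ : θ₀ ∈ Θ)
    (rmin rmax : ℝ) (h0 : 0 ≤ rmin) (hlt : rmin < rmax)
    (w : ℝ → ℝ) (hw : IntegrableOn w (Set.Icc rmin rmax) volume)
    (hwpos : ∀ t ∈ Set.Icc rmin rmax, 0 < w t)
    (Φ : ℝ → EuclideanSpace ℝ (Fin p) → ℝ)
    (hΦ : ContinuousOn (fun q : ℝ × EuclideanSpace ℝ (Fin p) => Φ q.1 q.2)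
      (Set.Icc rmin rmax ×ˢ Θ))
    (hident : ∀ θ ∈ Θ, θ ≠ θ₀ →
      0 < volume {t ∈ Set.Icc rmin rmax | Φ t θ ≠ Φ t θ₀})
    {Ω : Type*} [MeasurableSpace Ω] (P : Measure Ω) [IsProbabilityMeasure P]
    (A : Set ℝ) (hA : A ⊆ Set.Icc rmin rmax)
    (hAnull : volume (Set.Icc rmin rmax \ A) = 0)
    (φ : ℕ → Ω → ℝ → ℝ)
    (hφmeas : ∀ n, Measurable (Function.uncurry (φ n)))
    (hφbdd : ∀ n, ∀ ω, ∃ C, ∀ t ∈ Set.Icc rmin rmax, |φ n ω t| ≤ C)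
    (S : ℕ → Ω → ℝ)
    (hSdef : ∀ n ω, S n ω = sSup ((fun t => |φ n ω t - Φ t θ₀|) '' A))
    (hSmeas : ∀ n, Measurable (S n))
    (hSconv : TendstoInMeasure P S atTop (fun _ => (0 : ℝ)))
    (θhat : ℕ → Ω → EuclideanSpace ℝ (Fin p))
    (hθhatmeas : ∀ n, Measurable (θhat n))
    (hθhatΘ : ∀ n ω, θhat n ω ∈ Θ)
    (hmin : ∀ n, ∀ᵐ ω ∂P, ∀ θ ∈ Θ,
      (∫ t in Set.Icc rmin rmax, w t * (φ n ω t - Φ t (θhat n ω)) ^ 2) ≤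
      (∫ t in Set.Icc rmin rmax, w t * (φ n ω t - Φ t θ) ^ 2)) :
    ∀ ε > 0, Tendsto (fun n => P {ω | ε < ‖θhat n ω - θ₀‖}) atTop (nhds 0) := by
  intro ε hε
  set I : Set ℝ := Set.Icc rmin rmax with hIdef
  have hIvol : 0 < volume I := by
    rw [hIdef, Real.volume_Icc]
    exact ENNReal.ofReal_pos.mpr (sub_pos.mpr hlt)
  -- uniform bound on Φ
  obtain ⟨B0, hB0⟩ := (isCompact_Icc.prod hΘ).exists_bound_of_continuousOn hΦ
  set B : ℝ := max B0 0 with hBdef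
  have hBnn : (0:ℝ) ≤ B := le_max_right _ _
  have hB : ∀ t ∈ I, ∀ θ ∈ Θ, |Φ t θ| ≤ B := fun t ht θ hθ => by
    have := hB0 (t, θ) ⟨ht, hθ⟩
    rw [Real.norm_eq_abs] at this
    exact this.trans (le_max_left _ _)
  -- a.e. facts
  have haeI : ∀ᵐ t ∂(volume.restrict I), t ∈ I := ae_restrict_mem measurableSet_Icc
  have haeA : ∀ᵐ t ∂(volume.restrict I), t ∈ A := by
    rw [ae_restrict_iff' measurableSet_Icc, ae_iff]
    refine measure_mono_null ?_ hAnull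
    intro t ht
    push_neg at ht
    exact ⟨ht.1, ht.2⟩
  have hwae : ∀ᵐ t ∂(volume.restrict I), 0 ≤ w t := haeI.mono fun t ht => (hwpos t ht).le
  -- positive total weight
  set W : ℝ := ∫ t in I, w t with hWdef
  have hWpos : 0 < W := by
    rw [hWdef, setIntegral_pos_iff_support_of_nonneg_ae hwae hw]
    refine lt_of_lt_of_le hIvol (measure_mono ?_)
    exact fun t ht => ⟨(hwpos t ht).ne', ht⟩
  -- measurability helpers
  have hΦc : ∀ θ ∈ Θ, ContinuousOn (fun t => Φ t θ) I := by
    intro θ hθ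
    exact hΦ.comp ((continuous_id.prodMk continuous_const).continuousOn)
      (fun t ht => ⟨ht, hθ⟩)
  have hΦm : ∀ θ ∈ Θ, AEStronglyMeasurable (fun t => Φ t θ) (volume.restrict I) :=
    fun θ hθ => (hΦc θ hθ).aestronglyMeasurable measurableSet_Icc
  have hφm : ∀ n ω, AEStronglyMeasurable (fun t => φ n ω t) (volume.restrict I) :=
    fun n ω => ((hφmeas n).of_uncurry_left).aestronglyMeasurable
  -- integrability of w times bounded a.e.-measurable factor
  have hmul : ∀ (h : ℝ → ℝ), AEStronglyMeasurable h (volume.restrict I) → ∀ (C : ℝ),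
      (∀ᵐ t ∂(volume.restrict I), |h t| ≤ C) → Integrable (fun t => w t * h t) (volume.restrict I) := by
    intro h hm C hC
    have : Integrable (fun t => h t * w t) (volume.restrict I) :=
      Integrable.bdd_mul hw hm (by simpa [Real.norm_eq_abs] using hC)
    simpa [mul_comm] using this
  -- the limiting contrast
  set g : EuclideanSpace ℝ (Fin p) → ℝ :=
    fun θ => ∫ t in I, w t * (Φ t θ - Φ t θ₀) ^ 2 with hgdef
  have hg_int : ∀ θ ∈ Θ, Integrable (fun t => w t * (Φ t θ - Φ t θ₀) ^ 2) (volume.restrict I) := by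
    intro θ hθ
    refine hmul _ (((hΦm θ hθ).sub (hΦm θ₀ hθ₀)).pow 2) ((2*B)^2) ?_
    filter_upwards [haeI] with t ht
    have h1 := hB t ht θ hθ
    have h2 := hB t ht θ₀ hθ₀
    rw [abs_pow]
    have : |Φ t θ - Φ t θ₀| ≤ 2 * B := by
      calc |Φ t θ - Φ t θ₀| ≤ |Φ t θ| + |Φ t θ₀| := abs_sub _ _
        _ ≤ 2 * B := by linarith
    exact pow_le_pow_left₀ (abs_nonneg _) this 2
  have hgc : ContinuousOn g Θ := by
    rw [hgdef]
    refine continuousOn_of_dominated (bound := fun t => |w t| * (2*B)^2)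
      (fun θ hθ => hg_int θ hθ |>.1) ?_ (hw.abs.mul_const _) ?_
    · intro θ hθ
      filter_upwards [haeI] with t ht
      have h1 := hB t ht θ hθ
      have h2 := hB t ht θ₀ hθ₀
      rw [Real.norm_eq_abs, abs_mul, abs_pow]
      have h3 : |Φ t θ - Φ t θ₀| ≤ 2 * B := by
        calc |Φ t θ - Φ t θ₀| ≤ |Φ t θ| + |Φ t θ₀| := abs_sub _ _
          _ ≤ 2 * B := by linarith
      have h4 : |Φ t θ - Φ t θ₀| ^ 2 ≤ (2*B)^2 := pow_le_pow_left₀ (abs_nonneg _) h3 2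
      exact mul_le_mul_of_nonneg_left h4 (abs_nonneg _)
    · filter_upwards [haeI] with t ht
      have hc : ContinuousOn (fun θ => Φ t θ) Θ :=
        hΦ.comp ((continuous_const.prodMk continuous_id).continuousOn)
          (fun θ hθ => ⟨ht, hθ⟩)
      exact continuousOn_const.mul (((hc.sub continuousOn_const).pow 2))
  -- positivity of g away from θ₀
  have hgpos : ∀ θ ∈ Θ, θ ≠ θ₀ → 0 < g θ := by
    intro θ hθ hne
    rw [hgdef]
    have hnn : 0 ≤ᵐ[(volume.restrict I)] fun t => w t * (Φ t θ - Φ t θ₀) ^ 2 :=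
      haeI.mono fun t ht => mul_nonneg (hwpos t ht).le (sq_nonneg _)
    rw [setIntegral_pos_iff_support_of_nonneg_ae hnn (hg_int θ hθ)]
    refine lt_of_lt_of_le (hident θ hθ hne) (measure_mono ?_)
    rintro t ⟨ht, hne'⟩
    refine ⟨?_, ht⟩
    have hwt := hwpos t ht
    have : (Φ t θ - Φ t θ₀) ^ 2 ≠ 0 := pow_ne_zero _ (sub_ne_zero.mpr hne')
    simp only [Function.mem_support]
    positivity
  -- the set of parameters ε-away from θ₀
  set K : Set (EuclideanSpace ℝ (Fin p)) := Θ ∩ {θ | ε ≤ ‖θ - θ₀‖} with hKdef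
  have hKcl : IsClosed {θ : EuclideanSpace ℝ (Fin p) | ε ≤ ‖θ - θ₀‖} :=
    isClosed_le continuous_const ((continuous_id.sub continuous_const).norm)
  have hKcp : IsCompact K := hΘ.inter_right hKcl
  by_cases hKne : K.Nonempty
  swap
  · -- K empty : all the events are empty
    have hempty : ∀ n, {ω | ε < ‖θhat n ω - θ₀‖} = (∅ : Set Ω) := by
      intro n
      ext ω
      simp only [Set.mem_setOf_eq, Set.mem_empty_iff_false, iff_false, not_lt]
      by_contra hc
      push_neg at hc
      exact hKne ⟨θhat n ω, hθhatΘ n ω, le_of_lt hc⟩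
    simp only [hempty, measure_empty]
    exact tendsto_const_nhds
  -- minimize g on K
  obtain ⟨θs, hθsK, hθsmin'⟩ := hKcp.exists_isMinOn hKne (hgc.mono Set.inter_subset_left)
  have hθsmin : ∀ θ ∈ K, g θs ≤ g θ := fun θ hθ => hθsmin' hθ
  set m : ℝ := g θs with hmdef
  have hθsne : θs ≠ θ₀ := by
    intro h
    have := hθsK.2
    rw [h] at this
    simp at this
    exact absurd this (not_le.mpr hε)
  have hm : 0 < m := hgpos θs hθsK.1 hθsne
  set δ : ℝ := m / ((4 * B + 1) * W) with hδdef
  have hden : 0 < (4 * B + 1) * W := by positivity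
  have hδ : 0 < δ := div_pos hm hden
  -- A is nonempty
  have hAne : A.Nonempty := by
    by_contra h
    rw [Set.not_nonempty_iff_eq_empty] at h
    rw [h, Set.diff_empty] at hAnull
    exact absurd hAnull hIvol.ne'
  -- main inclusion
  have hsub : ∀ n, {ω | ε < ‖θhat n ω - θ₀‖} ≤ᵐ[P] {ω | δ ≤ dist (S n ω) 0} := by
    intro n
    filter_upwards [hmin n] with ω hminω hωε
    set θh := θhat n ω with hθhdef
    have hθhΘ : θh ∈ Θ := hθhatΘ n ω
    obtain ⟨C, hC⟩ := hφbdd n ω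
    set s : ℝ := S n ω with hsdef
    -- s bounds the deviation on A, and s ≥ 0
    have hbdd : BddAbove ((fun t => |φ n ω t - Φ t θ₀|) '' A) := by
      refine ⟨C + B, ?_⟩
      rintro x ⟨t, ht, rfl⟩
      have htI := hA ht
      calc |φ n ω t - Φ t θ₀| ≤ |φ n ω t| + |Φ t θ₀| := abs_sub _ _
        _ ≤ C + B := add_le_add (hC t htI) (hB t htI θ₀ hθ₀)
    have hsle : ∀ t ∈ A, |φ n ω t - Φ t θ₀| ≤ s := by
      intro t ht
      rw [hsdef, hSdef n ω]
      exact le_csSup hbdd ⟨t, ht, rfl⟩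
    have hs0 : 0 ≤ s := by
      obtain ⟨a, ha⟩ := hAne
      exact (abs_nonneg _).trans (hsle a ha)
    -- integrable pieces
    have hφsub : AEStronglyMeasurable (fun t => φ n ω t - Φ t θ₀) (volume.restrict I) :=
      (hφm n ω).sub (hΦm θ₀ hθ₀)
    have hi1 : Integrable (fun t => w t * (φ n ω t - Φ t θ₀) ^ 2) (volume.restrict I) := by
      refine hmul _ (hφsub.pow 2) ((C + B)^2) ?_
      filter_upwards [haeI] with t ht
      rw [abs_pow]
      refine pow_le_pow_left₀ (abs_nonneg _) ?_ 2
      calc |φ n ω t - Φ t θ₀| ≤ |φ n ω t| + |Φ t θ₀| := abs_sub _ _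
        _ ≤ C + B := add_le_add (hC t ht) (hB t ht θ₀ hθ₀)
    have hi2 : Integrable
        (fun t => w t * (2 * (φ n ω t - Φ t θ₀) * (Φ t θ₀ - Φ t θh))) (volume.restrict I) := by
      refine hmul _ ((hφsub.const_mul 2).mul ((hΦm θ₀ hθ₀).sub (hΦm θh hθhΘ)))
        (2 * (C + B) * (2 * B)) ?_
      filter_upwards [haeI] with t ht
      rw [abs_mul, abs_mul]
      have h1 : |φ n ω t - Φ t θ₀| ≤ C + B := by
        calc |φ n ω t - Φ t θ₀| ≤ |φ n ω t| + |Φ t θ₀| := abs_sub _ _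
          _ ≤ C + B := add_le_add (hC t ht) (hB t ht θ₀ hθ₀)
      have h2 : |Φ t θ₀ - Φ t θh| ≤ 2 * B := by
        have := hB t ht θ₀ hθ₀
        have := hB t ht θh hθhΘ
        calc |Φ t θ₀ - Φ t θh| ≤ |Φ t θ₀| + |Φ t θh| := abs_sub _ _
          _ ≤ 2 * B := by linarith
      have hCB : 0 ≤ C + B := le_trans (abs_nonneg _) h1
      have h2' : (0:ℝ) ≤ |2| * |φ n ω t - Φ t θ₀| := by positivity
      calc |2| * |φ n ω t - Φ t θ₀| * |Φ t θ₀ - Φ t θh|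
          ≤ |2| * (C + B) * (2 * B) := by
            refine mul_le_mul ?_ h2 (abs_nonneg _) (by positivity)
            exact mul_le_mul_of_nonneg_left h1 (abs_nonneg _)
        _ = 2 * (C + B) * (2 * B) := by norm_num
    have hi3 : Integrable (fun t => w t * (Φ t θh - Φ t θ₀) ^ 2) (volume.restrict I) :=
      hg_int θh hθhΘ
    -- decomposition of the contrast at θh
    have e1 : (∫ t in I, (w t * (2 * (φ n ω t - Φ t θ₀) * (Φ t θ₀ - Φ t θh)) +
          w t * (Φ t θh - Φ t θ₀) ^ 2)) =
        (∫ t in I, w t * (2 * (φ n ω t - Φ t θ₀) * (Φ t θ₀ - Φ t θh))) +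
        (∫ t in I, w t * (Φ t θh - Φ t θ₀) ^ 2) := integral_add hi2 hi3
    have e2 : (∫ t in I, (w t * (φ n ω t - Φ t θ₀) ^ 2 +
          (w t * (2 * (φ n ω t - Φ t θ₀) * (Φ t θ₀ - Φ t θh)) +
           w t * (Φ t θh - Φ t θ₀) ^ 2))) =
        (∫ t in I, w t * (φ n ω t - Φ t θ₀) ^ 2) +
        (∫ t in I, (w t * (2 * (φ n ω t - Φ t θ₀) * (Φ t θ₀ - Φ t θh)) +
          w t * (Φ t θh - Φ t θ₀) ^ 2)) := integral_add hi1 (hi2.add hi3)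
    have hdecomp :
        (∫ t in I, w t * (φ n ω t - Φ t θh) ^ 2) =
        (∫ t in I, w t * (φ n ω t - Φ t θ₀) ^ 2) +
        ((∫ t in I, w t * (2 * (φ n ω t - Φ t θ₀) * (Φ t θ₀ - Φ t θh))) +
         (∫ t in I, w t * (Φ t θh - Φ t θ₀) ^ 2)) := by
      rw [← e1, ← e2]
      refine integral_congr_ae (Filter.Eventually.of_forall fun t => ?_)
      ring
    have hUle := hminω θ₀ hθ₀
    -- cross-term bound
    have hcross : |∫ t in I, w t * (2 * (φ n ω t - Φ t θ₀) * (Φ t θ₀ - Φ t θh))|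
        ≤ s * (4 * B) * W := by
      have h1 : |∫ t in I, w t * (2 * (φ n ω t - Φ t θ₀) * (Φ t θ₀ - Φ t θh))|
          ≤ ∫ t in I, |w t * (2 * (φ n ω t - Φ t θ₀) * (Φ t θ₀ - Φ t θh))| := by
        have := norm_integral_le_integral_norm (μ := volume.restrict I)
          (fun t => w t * (2 * (φ n ω t - Φ t θ₀) * (Φ t θ₀ - Φ t θh)))
        simp only [Real.norm_eq_abs] at this
        exact this
      refine h1.trans ?_
      have h2 : (∫ t in I, |w t * (2 * (φ n ω t - Φ t θ₀) * (Φ t θ₀ - Φ t θh))|)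
          ≤ ∫ t in I, s * (4 * B) * w t := by
        refine integral_mono_ae hi2.abs (hw.const_mul _) ?_
        filter_upwards [haeI, haeA] with t ht htA
        have hwt := (hwpos t ht).le
        have h3 : |φ n ω t - Φ t θ₀| ≤ s := hsle t htA
        have h4 : |Φ t θ₀ - Φ t θh| ≤ 2 * B := by
          have := hB t ht θ₀ hθ₀
          have := hB t ht θh hθhΘ
          calc |Φ t θ₀ - Φ t θh| ≤ |Φ t θ₀| + |Φ t θh| := abs_sub _ _
            _ ≤ 2 * B := by linarith
        rw [abs_mul, abs_mul, abs_mul, abs_of_nonneg hwt]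
        have habs2 : |(2:ℝ)| = 2 := by norm_num
        rw [habs2]
        calc w t * (2 * |φ n ω t - Φ t θ₀| * |Φ t θ₀ - Φ t θh|)
            ≤ w t * (2 * s * (2 * B)) := by
              refine mul_le_mul_of_nonneg_left ?_ hwt
              refine mul_le_mul ?_ h4 (abs_nonneg _) (by positivity)
              exact mul_le_mul_of_nonneg_left h3 (by norm_num)
          _ = s * (4 * B) * w t := by ring
      refine h2.trans ?_
      rw [integral_const_mul]
    -- conclude : m ≤ s * ((4B+1) * W)
    have hωε' : ε < ‖θhat n ω - θ₀‖ := hωε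
    have hKmem : θh ∈ K := ⟨hθhΘ, le_of_lt hωε'⟩
    have hgθh : g θh = ∫ t in I, w t * (Φ t θh - Φ t θ₀) ^ 2 := rfl
    have hgle : g θh ≤ s * (4 * B) * W := by
      rw [hgθh]
      have hneg := neg_abs_le (∫ t in I, w t * (2 * (φ n ω t - Φ t θ₀) * (Φ t θ₀ - Φ t θh)))
      linarith [hcross, hUle, hdecomp]
    have hms : m ≤ s * ((4 * B + 1) * W) := by
      have h5 : m ≤ g θh := hθsmin θh hKmem
      have h6 : s * (4 * B) * W ≤ s * ((4 * B + 1) * W) := by nlinarith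
      linarith
    have hδs : δ ≤ s := by
      rw [hδdef, div_le_iff₀ hden]
      exact hms
    show δ ≤ dist (S n ω) 0
    rw [Real.dist_eq, sub_zero, ← hsdef, abs_of_nonneg hs0]
    exact hδs
  -- squeeze
  refine tendsto_of_tendsto_of_tendsto_of_le_of_le tendsto_const_nhds (tendstoInMeasure_iff_dist.mp hSconv δ hδ)
    (fun n => zero_le) (fun n => measure_mono_ae (hsub n))
end

section
/- Let p ≥ 1, let Θ ⊆ ℝ^p be compact and θ₀ ∈ Θ. Let 0 ≤ r_min < r_max, let w : ℝ → ℝ be Lebesgue-integrable on [r_min, r_max] with w(t) > 0 for every t ∈ [r_min, r_max], and let Φ : [r_min, r_max] × Θ → ℝ be continuous, satisfying identifiability: for every θ ∈ Θ with θ ≠ θ₀, the set { t ∈ [r_min,r_max] : Φ(t,θ) ≠ Φ(t,θ₀) } has positive Lebesgue measure. Let (Ω, 𝒜, P) be a probability space, A ⊆ [r_min,r_max] with Lebesgue-null complement in [r_min,r_max], and for each n let φ_n : Ω × [r_min,r_max] → ℝ be jointly measurable with φ_n(ω,·) bounded for every ω. Assume that, P-almost surely, sup_{t∈A} |φ_n(ω,t)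 − Φ(t,θ₀)| → 0 as n → ∞. Let θ̂_n : Ω → ℝ^p be measurable with θ̂_n(ω) ∈ Θ and such that, for P-almost every ω, U(φ_n(ω,·), θ̂_n(ω)) ≤ U(φ_n(ω,·), θ) for all θ ∈ Θ. Then θ̂_n → θ₀ P-almost surely. -/
open MeasureTheory Filter

/-- Pointwise algebraic bound used for the uniform contrast comparison. -/
lemma sq_diff_contrast_bound {a b c ε M : ℝ} (hab : |a - b| ≤ ε)
    (hb : |b| ≤ M) (hc : |c| ≤ M) :
    |(a - c) ^ 2 - (c - b) ^ 2| ≤ ε * (ε + 4 * M) := by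
  have hε : 0 ≤ ε := le_trans (abs_nonneg _) hab
  have hid : (a - c) ^ 2 - (c - b) ^ 2 = (a - b) * ((a - b) + 2 * (b - c)) := by ring
  rw [hid, abs_mul]
  have h2 : |(a - b) + 2 * (b - c)| ≤ ε + 4 * M := by
    calc |(a - b) + 2 * (b - c)| ≤ |a - b| + |2 * (b - c)| := abs_add_le _ _
      _ ≤ ε + 4 * M := by
          have : |2 * (b - c)| = 2 * |b - c| := by
            rw [abs_mul]; norm_num
          rw [this]
          have hbc : |b - c| ≤ 2 * M := by
            calc |b - c| ≤ |b| + |c| := abs_sub _ _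
              _ ≤ 2 * M := by linarith
          linarith
  exact mul_le_mul hab h2 (abs_nonneg _) hε

/-- Theorem A.1, strong-consistency conclusion under the almost-sure uniform convergence
assumption (A5)': measurable minimizers `θ̂_n` of the random contrast
`θ ↦ ∫ w (φ_n(ω,·) - Φ(·,θ))²` converge to `θ₀` P-almost surely. -/
theorem minimum_contrast_strong_consistency
    (p : ℕ) (hp : 1 ≤ p)
    (Θ : Set (EuclideanSpace ℝ (Fin p))) (hΘ : IsCompact Θ)
    (θ₀ : EuclideanSpace ℝ (Fin p)) (hθ₀ : θ₀ ∈ Θ)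
    (rmin rmax : ℝ) (h0 : 0 ≤ rmin) (hlt : rmin < rmax)
    (w : ℝ → ℝ) (hw : IntegrableOn w (Set.Icc rmin rmax) volume)
    (hwpos : ∀ t ∈ Set.Icc rmin rmax, 0 < w t)
    (Φ : ℝ → EuclideanSpace ℝ (Fin p) → ℝ)
    (hΦ : ContinuousOn (fun q : ℝ × EuclideanSpace ℝ (Fin p) => Φ q.1 q.2)
      (Set.Icc rmin rmax ×ˢ Θ))
    (hident : ∀ θ ∈ Θ, θ ≠ θ₀ →
      0 < volume {t ∈ Set.Icc rmin rmax | Φ t θ ≠ Φ t θ₀})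
    {Ω : Type*} [MeasurableSpace Ω] (P : Measure Ω) [IsProbabilityMeasure P]
    (A : Set ℝ) (hA : A ⊆ Set.Icc rmin rmax)
    (hAnull : volume (Set.Icc rmin rmax \ A) = 0)
    (φ : ℕ → Ω → ℝ → ℝ)
    (hφmeas : ∀ n, Measurable (Function.uncurry (φ n)))
    (hφbdd : ∀ n, ∀ ω, ∃ C, ∀ t ∈ Set.Icc rmin rmax, |φ n ω t| ≤ C)
    (hconv : ∀ᵐ ω ∂P,
      TendstoUniformlyOn (fun n t => φ n ω t) (fun t => Φ t θ₀) atTop A)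
    (θhat : ℕ → Ω → EuclideanSpace ℝ (Fin p))
    (hθhatmeas : ∀ n, Measurable (θhat n))
    (hθhatΘ : ∀ n ω, θhat n ω ∈ Θ)
    (hmin : ∀ᵐ ω ∂P, ∀ n, ∀ θ ∈ Θ,
      (∫ t in Set.Icc rmin rmax, w t * (φ n ω t - Φ t (θhat n ω)) ^ 2) ≤
      (∫ t in Set.Icc rmin rmax, w t * (φ n ω t - Φ t θ) ^ 2)) :
    ∀ᵐ ω ∂P, Tendsto (fun n => θhat n ω) atTop (nhds θ₀) := by
  classical
  set I : Set ℝ := Set.Icc rmin rmax with hIdef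
  have hImeas : MeasurableSet I := measurableSet_Icc
  -- a.e. membership facts for the restricted measure
  have haeI : ∀ᵐ t ∂(volume.restrict I), t ∈ I := ae_restrict_mem hImeas
  have haeA : ∀ᵐ t ∂(volume.restrict I), t ∈ A := by
    rw [ae_iff]
    have h1 : (volume.restrict I) {t | ¬ t ∈ A} = volume ({t | ¬ t ∈ A} ∩ I) :=
      Measure.restrict_apply' hImeas
    rw [h1]
    refine measure_mono_null ?_ hAnull
    intro t ht; exact ⟨ht.2, ht.1⟩
  -- bound on Φ over the compact product
  have hcompact : IsCompact (I ×ˢ Θ) := isCompact_Icc.prod hΘ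
  obtain ⟨M₀, hM₀⟩ := hcompact.exists_bound_of_continuousOn hΦ
  set M : ℝ := max M₀ 0 with hMdef
  have hM0 : (0:ℝ) ≤ M := le_max_right _ _
  have hMbound : ∀ t ∈ I, ∀ θ ∈ Θ, |Φ t θ| ≤ M := fun t ht θ hθ =>
    le_trans (hM₀ (t, θ) ⟨ht, hθ⟩) (le_max_left _ _)
  -- continuity in each variable
  have hΦt : ∀ θ ∈ Θ, ContinuousOn (fun t => Φ t θ) I := by
    intro θ hθ
    exact hΦ.comp ((continuous_id.prodMk continuous_const).continuousOn)
      (fun t ht => ⟨ht, hθ⟩)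
  have hΦθcont : ∀ t ∈ I, ContinuousOn (fun θ => Φ t θ) Θ := by
    intro t ht
    exact hΦ.comp ((continuous_const.prodMk continuous_id).continuousOn)
      (fun θ hθ => ⟨ht, hθ⟩)
  -- measurability facts
  have hΦm : ∀ θ ∈ Θ, AEStronglyMeasurable (fun t => Φ t θ) (volume.restrict I) :=
    fun θ hθ => (hΦt θ hθ).aestronglyMeasurable hImeas
  have hφm : ∀ n ω, AEStronglyMeasurable (fun t => φ n ω t) (volume.restrict I) :=
    fun n ω => ((hφmeas n).comp measurable_prodMk_left).aestronglyMeasurable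
  -- integrability helper: w times a bounded a.e.-measurable function is integrable on I
  have hInt : ∀ (g : ℝ → ℝ) (C : ℝ), AEStronglyMeasurable g (volume.restrict I) →
      (∀ᵐ t ∂(volume.restrict I), |g t| ≤ C) →
      Integrable (fun t => w t * g t) (volume.restrict I) := by
    intro g C hgm hgC
    have := Integrable.bdd_mul (f := g) (g := w) (c := C) hw hgm
      (by simpa [Real.norm_eq_abs] using hgC)
    simpa [mul_comm] using this
  have habs_sq : ∀ x B : ℝ, |x| ≤ B → |x ^ 2| ≤ B ^ 2 := by
    intro x B h
    rw [abs_pow]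
    exact pow_le_pow_left₀ (abs_nonneg _) h 2
  -- integrability of the limiting integrand
  have hIntΦ : ∀ θ ∈ Θ,
      Integrable (fun t => w t * (Φ t θ - Φ t θ₀) ^ 2) (volume.restrict I) := by
    intro θ hθ
    refine hInt _ ((2*M)^2) ?_ ?_
    · have h1 := (hΦm θ hθ).sub (hΦm θ₀ hθ₀)
      simpa [pow_two, Pi.mul_def, Pi.sub_def] using h1.mul h1
    · filter_upwards [haeI] with t ht
      refine habs_sq _ _ ?_
      calc |Φ t θ - Φ t θ₀| ≤ |Φ t θ| + |Φ t θ₀| := abs_sub _ _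
        _ ≤ 2 * M := by
            have := hMbound t ht θ hθ; have := hMbound t ht θ₀ hθ₀; linarith
  -- integrability of the empirical integrand
  have hIntφ : ∀ n ω, ∀ θ ∈ Θ,
      Integrable (fun t => w t * (φ n ω t - Φ t θ) ^ 2) (volume.restrict I) := by
    intro n ω θ hθ
    obtain ⟨C, hC⟩ := hφbdd n ω
    refine hInt _ ((C + M)^2) ?_ ?_
    · have h1 := (hφm n ω).sub (hΦm θ hθ)
      simpa [pow_two, Pi.mul_def, Pi.sub_def] using h1.mul h1
    · filter_upwards [haeI] with t ht
      refine habs_sq _ _ ?_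
      calc |φ n ω t - Φ t θ| ≤ |φ n ω t| + |Φ t θ| := abs_sub _ _
        _ ≤ C + M := add_le_add (hC t ht) (hMbound t ht θ hθ)
  -- the limiting contrast
  set U : EuclideanSpace ℝ (Fin p) → ℝ :=
    fun θ => ∫ t in I, w t * (Φ t θ - Φ t θ₀) ^ 2 with hUdef
  have hU0 : U θ₀ = 0 := by simp [hUdef]
  have hUnonneg : ∀ θ, 0 ≤ U θ := fun θ =>
    setIntegral_nonneg hImeas (fun t ht => mul_nonneg (hwpos t ht).le (sq_nonneg _))
  -- continuity of U on Θ
  have hUcont : ContinuousOn U Θ := by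
    refine continuousOn_of_dominated (bound := fun t => |w t| * (2*M)^2)
      (fun θ hθ => (hIntΦ θ hθ).aestronglyMeasurable) ?_ ((hw.abs).mul_const _) ?_
    · intro θ hθ
      filter_upwards [haeI] with t ht
      rw [Real.norm_eq_abs, abs_mul]
      refine mul_le_mul_of_nonneg_left ?_ (abs_nonneg _)
      refine habs_sq _ _ ?_
      calc |Φ t θ - Φ t θ₀| ≤ |Φ t θ| + |Φ t θ₀| := abs_sub _ _
        _ ≤ 2 * M := by
            have := hMbound t ht θ hθ; have := hMbound t ht θ₀ hθ₀; linarith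
    · filter_upwards [haeI] with t ht
      exact continuousOn_const.mul (((hΦθcont t ht).sub continuousOn_const).pow 2)
  -- positivity of U away from θ₀
  have hUpos : ∀ θ ∈ Θ, θ ≠ θ₀ → 0 < U θ := by
    intro θ hθ hne
    have hnonneg : 0 ≤ᵐ[volume.restrict I] fun t => w t * (Φ t θ - Φ t θ₀) ^ 2 := by
      filter_upwards [haeI] with t ht
      exact mul_nonneg (hwpos t ht).le (sq_nonneg _)
    rw [hUdef]
    rw [setIntegral_pos_iff_support_of_nonneg_ae hnonneg (hIntΦ θ hθ)]
    refine lt_of_lt_of_le (hident θ hθ hne) (measure_mono ?_)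
    intro t ht
    refine ⟨?_, ht.1⟩
    simp only [Function.mem_support]
    exact mul_ne_zero (hwpos t ht.1).ne' (pow_ne_zero _ (sub_ne_zero.mpr ht.2))
  -- total weight
  set W : ℝ := ∫ t in I, |w t| with hWdef
  have hW0 : 0 ≤ W :=
    setIntegral_nonneg hImeas (fun t _ => abs_nonneg _)
  -- main almost-sure argument
  filter_upwards [hconv, hmin] with ω hconvω hminω
  -- Step 1: the limiting contrast along the estimators tends to 0
  have hUsmall : ∀ c > (0:ℝ), ∀ᶠ n in atTop, U (θhat n ω) < c := by
    intro c hc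
    set ε : ℝ := min 1 (c / (2 * (1 + 4 * M) * (W + 1))) with hεdef
    have hden : 0 < 2 * (1 + 4 * M) * (W + 1) := by positivity
    have hεpos : 0 < ε := lt_min one_pos (div_pos hc hden)
    have hε1 : ε ≤ 1 := min_le_left _ _
    have hε2 : ε * (2 * (1 + 4 * M) * (W + 1)) ≤ c := by
      rw [← le_div_iff₀ hden]
      exact min_le_right _ _
    have hunif := (Metric.tendstoUniformlyOn_iff.mp hconvω) ε hεpos
    filter_upwards [hunif] with n hn
    -- uniform contrast comparison
    have hest : ∀ θ ∈ Θ,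
        |(∫ t in I, w t * (φ n ω t - Φ t θ) ^ 2) - U θ| ≤ W * (ε * (ε + 4 * M)) := by
      intro θ hθ
      have hf := hIntφ n ω θ hθ
      have hg := hIntΦ θ hθ
      rw [hUdef, ← integral_sub hf hg]
      have hbound : ∀ᵐ t ∂(volume.restrict I),
          ‖w t * (φ n ω t - Φ t θ) ^ 2 - w t * (Φ t θ - Φ t θ₀) ^ 2‖ ≤
            |w t| * (ε * (ε + 4 * M)) := by
        filter_upwards [haeI, haeA] with t ht htA
        rw [Real.norm_eq_abs, ← mul_sub, abs_mul]
        refine mul_le_mul_of_nonneg_left ?_ (abs_nonneg _)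
        have hab : |φ n ω t - Φ t θ₀| ≤ ε := by
          have := hn t htA
          rw [dist_comm] at this
          rw [Real.dist_eq] at this
          exact this.le
        exact sq_diff_contrast_bound hab (hMbound t ht θ₀ hθ₀) (hMbound t ht θ hθ)
      calc |∫ t in I, (w t * (φ n ω t - Φ t θ) ^ 2 - w t * (Φ t θ - Φ t θ₀) ^ 2)|
          ≤ ∫ t in I, ‖w t * (φ n ω t - Φ t θ) ^ 2 - w t * (Φ t θ - Φ t θ₀) ^ 2‖ :=
            by rw [← Real.norm_eq_abs]; exact norm_integral_le_integral_norm _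
        _ ≤ ∫ t in I, |w t| * (ε * (ε + 4 * M)) := by
            refine integral_mono_ae ((hf.sub hg).norm) ((hw.abs).mul_const _) hbound
        _ = W * (ε * (ε + 4 * M)) := by
            rw [hWdef, integral_mul_const]
    -- combine with the minimizing property at θ₀
    have h1 := hest (θhat n ω) (hθhatΘ n ω)
    have h2 := hest θ₀ hθ₀
    have h3 := hminω n θ₀ hθ₀
    have hUhat : U (θhat n ω) ≤ 2 * (W * (ε * (ε + 4 * M))) := by
      have e1 : U (θhat n ω) ≤ (∫ t in I, w t * (φ n ω t - Φ t (θhat n ω)) ^ 2)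
          + W * (ε * (ε + 4 * M)) := by
        have := abs_le.mp h1
        linarith [this.1]
      have e2 : (∫ t in I, w t * (φ n ω t - Φ t θ₀) ^ 2) ≤ U θ₀ + W * (ε * (ε + 4 * M)) := by
        have := abs_le.mp h2
        linarith [this.2]
      rw [hU0] at e2
      linarith
    refine lt_of_le_of_lt hUhat ?_
    -- arithmetic: 2 W ε (ε + 4M) < c
    nlinarith [mul_nonneg hW0 hεpos.le, mul_nonneg hεpos.le hM0,
      mul_nonneg (mul_nonneg hW0 hεpos.le) hM0, hεpos.le]
  -- Step 2: conclude convergence via compactness of Θ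
  rw [Metric.tendsto_atTop]
  intro ε hε
  set K : Set (EuclideanSpace ℝ (Fin p)) := Θ ∩ {θ | ε ≤ dist θ θ₀} with hKdef
  have hKcomp : IsCompact K :=
    hΘ.inter_right (isClosed_le continuous_const (continuous_id.dist continuous_const))
  by_cases hKe : K.Nonempty
  · obtain ⟨θs, hθsK, hθsmin⟩ :=
      hKcomp.exists_isMinOn hKe (hUcont.mono Set.inter_subset_left)
    have hθsne : θs ≠ θ₀ := by
      intro h
      have := hθsK.2
      rw [h] at this
      simp at this
      linarith
    have hm : 0 < U θs := hUpos θs hθsK.1 hθsne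
    obtain ⟨N, hN⟩ := (hUsmall (U θs) hm).exists_forall_of_atTop
    refine ⟨N, fun n hn => ?_⟩
    by_contra hcon
    have hmem : θhat n ω ∈ K := ⟨hθhatΘ n ω, not_lt.mp hcon⟩
    exact absurd (isMinOn_iff.mp hθsmin _ hmem) (not_le.mpr (hN n hn))
  · refine ⟨0, fun n _ => ?_⟩
    by_contra hcon
    exact hKe ⟨θhat n ω, hθhatΘ n ω, not_lt.mp hcon⟩
end

section
/- Let p ≥ 1, let Θ ⊆ ℝ^p be compact and θ₀ ∈ Θ. Let 0 ≤ r_min < r_max, let w : ℝ → ℝ be Lebesgue-integrable on [r_min, r_max] with w(t) > 0 for every t ∈ [r_min, r_max], and let Φ : [r_min, r_max] × Θ → ℝ be continuous, satisfying identifiability: for every θ ∈ Θ with θ ≠ θ₀, the set { t ∈ [r_min,r_max] : Φ(t,θ) ≠ Φ(t,θ₀) } has positive Lebesgue measure. Then for every ε > 0 there exists m > 0 such that for every θ ∈ Θ with ‖θ − θ₀‖ ≥ ε one has ∫_{r_min}^{r_max} w(t) ( Φ(t,θ) − Φ(t,θ₀) )² dt ≥ m. -/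
open MeasureTheory Filter

/-- Separation property in the proof of Theorem A.1: under identifiability, continuity of `Φ`
on the compact `[r_min,r_max] × Θ` and positivity of `w`, the limiting contrast
`θ ↦ ∫ w (Φ(·,θ) - Φ(·,θ₀))²` is bounded away from `0` outside any neighbourhood of `θ₀`. -/
theorem limiting_contrast_separation
    (p : ℕ) (hp : 1 ≤ p)
    (Θ : Set (EuclideanSpace ℝ (Fin p))) (hΘ : IsCompact Θ)
    (θ₀ : EuclideanSpace ℝ (Fin p)) (hθ₀ : θ₀ ∈ Θ)
    (rmin rmax : ℝ) (h0 : 0 ≤ rmin) (hlt : rmin < rmax)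
    (w : ℝ → ℝ) (hw : IntegrableOn w (Set.Icc rmin rmax) volume)
    (hwpos : ∀ t ∈ Set.Icc rmin rmax, 0 < w t)
    (Φ : ℝ → EuclideanSpace ℝ (Fin p) → ℝ)
    (hΦ : ContinuousOn (fun q : ℝ × EuclideanSpace ℝ (Fin p) => Φ q.1 q.2)
      (Set.Icc rmin rmax ×ˢ Θ))
    (hident : ∀ θ ∈ Θ, θ ≠ θ₀ →
      0 < volume {t ∈ Set.Icc rmin rmax | Φ t θ ≠ Φ t θ₀}) :
    ∀ ε > 0, ∃ m > 0, ∀ θ ∈ Θ, ε ≤ ‖θ - θ₀‖ →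
      m ≤ ∫ t in Set.Icc rmin rmax, w t * (Φ t θ - Φ t θ₀) ^ 2 := by
  intro ε hε
  set S := Set.Icc rmin rmax with hSdef
  have hSmeas : MeasurableSet S := measurableSet_Icc
  set g : EuclideanSpace ℝ (Fin p) → ℝ → ℝ :=
    fun θ t => w t * (Φ t θ - Φ t θ₀) ^ 2 with hgdef
  -- slice continuity
  have hslice : ∀ θ ∈ Θ, ContinuousOn (fun t => Φ t θ) S := fun θ hθ =>
    hΦ.comp ((continuous_id.prodMk continuous_const).continuousOn)
      (fun t ht => ⟨ht, hθ⟩)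
  have hslice' : ∀ t ∈ S, ContinuousOn (fun θ => Φ t θ) Θ := fun t ht =>
    hΦ.comp ((continuous_const.prodMk continuous_id).continuousOn)
      (fun θ hθ => ⟨ht, hθ⟩)
  -- global bound on Φ
  obtain ⟨C, hC⟩ := (isCompact_Icc.prod hΘ).exists_bound_of_continuousOn hΦ
  have hbound : ∀ θ ∈ Θ, ∀ t ∈ S, ‖g θ t‖ ≤ (2 * C) ^ 2 * ‖w t‖ := by
    intro θ hθ t ht
    have h1 : |Φ t θ| ≤ C := hC (t, θ) ⟨ht, hθ⟩
    have h2 : |Φ t θ₀| ≤ C := hC (t, θ₀) ⟨ht, hθ₀⟩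
    have hd : |Φ t θ - Φ t θ₀| ≤ 2 * C := by
      calc |Φ t θ - Φ t θ₀| ≤ |Φ t θ| + |Φ t θ₀| := abs_sub _ _
        _ ≤ 2 * C := by linarith
    have : (Φ t θ - Φ t θ₀) ^ 2 ≤ (2 * C) ^ 2 := by
      rw [← sq_abs]
      exact pow_le_pow_left₀ (abs_nonneg _) hd 2
    calc ‖g θ t‖ = ‖w t‖ * (Φ t θ - Φ t θ₀) ^ 2 := by
          simp only [hgdef, norm_mul, Real.norm_eq_abs]
          rw [abs_of_nonneg (sq_nonneg (Φ t θ - Φ t θ₀))]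
      _ ≤ ‖w t‖ * (2 * C) ^ 2 := by
          exact mul_le_mul_of_nonneg_left this (norm_nonneg _)
      _ = (2 * C) ^ 2 * ‖w t‖ := mul_comm _ _
  have hmeas : ∀ θ ∈ Θ, AEStronglyMeasurable (g θ) (volume.restrict S) := by
    intro θ hθ
    exact hw.aestronglyMeasurable.mul
      ((((hslice θ hθ).sub (hslice θ₀ hθ₀)).pow 2).aestronglyMeasurable hSmeas)
  have hbdd_int : Integrable (fun t => (2 * C) ^ 2 * ‖w t‖) (volume.restrict S) :=
    hw.norm.const_mul _
  have hint : ∀ θ ∈ Θ, IntegrableOn (g θ) S := by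
    intro θ hθ
    exact Integrable.mono' hbdd_int (hmeas θ hθ)
      (ae_restrict_of_forall_mem hSmeas fun t ht => hbound θ hθ t ht)
  -- F
  set F : EuclideanSpace ℝ (Fin p) → ℝ := fun θ => ∫ t in S, g θ t with hFdef
  have hFpos : ∀ θ ∈ Θ, θ ≠ θ₀ → 0 < F θ := by
    intro θ hθ hne
    rw [hFdef]
    rw [setIntegral_pos_iff_support_of_nonneg_ae
      (ae_restrict_of_forall_mem hSmeas fun t ht =>
        mul_nonneg (hwpos t ht).le (sq_nonneg _)) (hint θ hθ)]
    refine lt_of_lt_of_le (hident θ hθ hne) (measure_mono ?_)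
    rintro t ⟨ht, hΦne⟩
    refine ⟨?_, ht⟩
    simp only [Function.mem_support, hgdef]
    exact mul_ne_zero (hwpos t ht).ne' (pow_ne_zero 2 (sub_ne_zero_of_ne hΦne))
  -- continuity of F on Θ
  have hFcont : ContinuousOn F Θ := by
    rw [continuousOn_iff_continuous_restrict]
    rw [continuous_iff_continuousAt]
    intro x₀
    apply continuousAt_of_dominated (bound := fun t => (2 * C) ^ 2 * ‖w t‖)
    · exact Eventually.of_forall fun x => hmeas x.1 x.2
    · exact Eventually.of_forall fun x =>
        ae_restrict_of_forall_mem hSmeas fun t ht => hbound x.1 x.2 t ht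
    · exact hbdd_int
    · refine ae_restrict_of_forall_mem hSmeas fun t ht => ?_
      have : Continuous fun x : ↥Θ => g (↑x) t := by
        have hc : Continuous fun x : ↥Θ => Φ t (↑x) :=
          continuousOn_iff_continuous_restrict.1 (hslice' t ht)
        exact continuous_const.mul (((hc.sub continuous_const).pow 2))
      exact this.continuousAt
  -- compact set away from θ₀
  set K : Set (EuclideanSpace ℝ (Fin p)) := Θ ∩ {θ | ε ≤ ‖θ - θ₀‖} with hKdef
  have hKclosed : IsClosed {θ : EuclideanSpace ℝ (Fin p) | ε ≤ ‖θ - θ₀‖} :=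
    isClosed_le continuous_const ((continuous_id.sub continuous_const).norm)
  have hKcomp : IsCompact K := hΘ.inter_right hKclosed
  rcases K.eq_empty_or_nonempty with hKe | hKne
  · refine ⟨1, one_pos, fun θ hθ hεθ => ?_⟩
    exfalso
    rw [Set.eq_empty_iff_forall_notMem] at hKe
    exact hKe θ ⟨hθ, hεθ⟩
  · obtain ⟨θ₁, hθ₁K, hmin⟩ :=
      hKcomp.exists_isMinOn hKne (hFcont.mono Set.inter_subset_left)
    have hθ₁ne : θ₁ ≠ θ₀ := by
      intro h
      have := hθ₁K.2
      rw [h] at this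
      simp only [Set.mem_setOf_eq, sub_self, norm_zero] at this
      linarith
    refine ⟨F θ₁, hFpos θ₁ hθ₁K.1 hθ₁ne, fun θ hθ hεθ => ?_⟩
    exact hmin (Set.mem_inter hθ hεθ)
end
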